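/- Let X₁, …, Xₙ be independent {0,1}-valued random variables on a probability space with P(Xᵢ = 1) = pᵢ for each i, and set p̄ = (1/n)·∑ᵢ pᵢ. Define g : ℕ → ℝ by g(0) = 0 and g(t) = t^(−1/2) for t ≥ 1. If n·p̄ > 1, then E[g(∑_{i=1}^{n} Xᵢ)] < 2·(n·p̄)^(−1/2). -/

import Mathlib

open MeasureTheory ProbabilityTheory

lemma exp_comp_eq_sum' {Ω : Type*} [MeasurableSpace Ω] (μ : Measure Ω) [IsProbabilityMeasure μ]
    (S : Ω → ℕ) (hS : Measurable S) (n : ℕ) (hSle : ∀ ω, S ω ≤ n) (h : ℕ → ℝ) :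
    ∫ ω, h (S ω) ∂μ = ∑ k ∈ Finset.range (n+1), h k * (μ {ω | S ω = k}).toReal := by
  have hmeasset : ∀ k : ℕ, MeasurableSet {ω | S ω = k} := fun k =>
    hS (measurableSet_singleton k)
  have hpt : ∀ ω, h (S ω) = ∑ k ∈ Finset.range (n+1),
      Set.indicator {ω' | S ω' = k} (fun _ => h k) ω := by
    intro ω
    rw [Finset.sum_eq_single (S ω)]
    · simp [Set.indicator_apply]
    · intro k hk hne
      apply Set.indicator_of_notMem
      simpa using fun h' => hne h'.symm
    · intro hnot
      exact absurd (Finset.mem_range.2 (Nat.lt_succ_of_le (hSle ω))) hnot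
  calc ∫ ω, h (S ω) ∂μ
      = ∫ ω, ∑ k ∈ Finset.range (n+1), Set.indicator {ω' | S ω' = k} (fun _ => h k) ω ∂μ := by
        simp_rw [← hpt]
    _ = ∑ k ∈ Finset.range (n+1), ∫ ω, Set.indicator {ω' | S ω' = k} (fun _ => h k) ω ∂μ := by
        apply integral_finset_sum
        intro k _
        exact (integrable_const (h k)).indicator (hmeasset k)
    _ = _ := by
        refine Finset.sum_congr rfl fun k _ => ?_
        rw [integral_indicator_const _ (hmeasset k), smul_eq_mul, mul_comm, measureReal_def]

lemma indep_pow_prod' {Ω : Type*} [MeasurableSpace Ω] {μ : Measure Ω} [IsProbabilityMeasure μ]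
    {n : ℕ} {X : Fin n → Ω → ℕ} (hmeas : ∀ i, Measurable (X i))
    (hindep : iIndepFun X μ) (x : ℝ) (s : Finset (Fin n)) :
    ∫ ω, ∏ i ∈ s, x ^ X i ω ∂μ = ∏ i ∈ s, ∫ ω, x ^ X i ω ∂μ := by
  classical
  have hYmeas : ∀ i, Measurable (fun ω => x ^ X i ω) :=
    fun i => measurable_from_top.comp (hmeas i)
  have hYindep : iIndepFun (fun i ω => x ^ X i ω) μ :=
    hindep.comp (fun _ t => x ^ t) (fun _ => measurable_from_top)
  induction s using Finset.induction_on with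
  | empty => simp
  | @insert i s hi ih =>
    rw [Finset.prod_insert hi]
    have hIF : IndepFun (fun ω => x ^ X i ω) (fun ω => ∏ j ∈ s, x ^ X j ω) μ := by
      have := (hYindep.indepFun_finsetProd_of_notMem hYmeas hi).symm
      simpa [Finset.prod_fn] using this
    have hmul := hIF.integral_fun_mul_eq_mul_integral (hYmeas i).aestronglyMeasurable
      (Finset.measurable_prod s (fun j _ => hYmeas j)).aestronglyMeasurable
    simp_rw [Finset.prod_insert hi]
    rw [hmul, ih]

lemma sqrt_bound_aux (g : ℕ → ℝ) (hg0 : g 0 = 0)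
    (hg1 : ∀ t : ℕ, 1 ≤ t → g t = (t : ℝ) ^ (-(1/2) : ℝ)) (k : ℕ) :
    g k < 2 * (1 / Real.sqrt (k + 1)) := by
  rcases Nat.eq_zero_or_pos k with rfl | hk
  · rw [hg0]
    norm_num
  · have hk1 : (1:ℝ) ≤ (k:ℝ) := by exact_mod_cast hk
    have hks : 0 < Real.sqrt k := Real.sqrt_pos.2 (by linarith)
    have hks1 : 0 < Real.sqrt ((k:ℝ) + 1) := Real.sqrt_pos.2 (by linarith)
    have hgk : g k = (Real.sqrt k)⁻¹ := by
      rw [hg1 k hk, Real.rpow_neg (by positivity), Real.sqrt_eq_rpow]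
    rw [hgk, mul_one_div, inv_eq_one_div, div_lt_div_iff₀ hks hks1]
    have h4 : Real.sqrt (4 * (k:ℝ)) = 2 * Real.sqrt k := by
      rw [show (4:ℝ) * k = (2 * Real.sqrt k)^2 by
        rw [mul_pow, Real.sq_sqrt (by positivity)]; ring]
      exact Real.sqrt_sq (by positivity)
    have : Real.sqrt ((k:ℝ)+1) < Real.sqrt (4 * (k:ℝ)) :=
      Real.sqrt_lt_sqrt (by positivity) (by linarith)
    rw [h4] at this
    linarith

lemma exp_integral_aux (m : ℝ) (hm : 0 < m) :
    ∫ x in (0:ℝ)..1, Real.exp (-(1-x)*m) = (1 - Real.exp (-m))/m := by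
  have h1 : ∀ x : ℝ, Real.exp (-(1-x)*m) = Real.exp (m*x) * Real.exp (-m) := by
    intro x; rw [← Real.exp_add]; ring_nf
  simp_rw [h1]
  rw [intervalIntegral.integral_mul_const]
  have h2 : ∫ x in (0:ℝ)..1, Real.exp (m*x) = (Real.exp m - 1)/m := by
    rw [intervalIntegral.integral_comp_mul_left (fun x => Real.exp x) hm.ne']
    simp [integral_exp, Real.exp_zero]
    ring
  rw [h2, Real.exp_neg]
  rw [div_mul_eq_mul_div, mul_comm]
  have he : Real.exp m ≠ 0 := Real.exp_ne_zero m
  field_simp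

set_option maxHeartbeats 1000000 in
/-- For independent Bernoulli random variables `X i` with success probabilities `p i`,
if `n * p̄ > 1` then `E[g(∑ X i)] < 2 (n p̄)^{-1/2}` where `g 0 = 0` and
`g t = t^{-1/2}` for `t ≥ 1`. -/
theorem stmt_1 {Ω : Type*} [MeasurableSpace Ω] (μ : Measure Ω) [IsProbabilityMeasure μ]
    (n : ℕ) (hn : 1 ≤ n) (X : Fin n → Ω → ℕ)
    (hmeas : ∀ i, Measurable (X i))
    (hval : ∀ i ω, X i ω = 0 ∨ X i ω = 1)
    (hindep : iIndepFun X μ)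
    (p : Fin n → ℝ)
    (hp : ∀ i, (μ {ω | X i ω = 1}).toReal = p i)
    (g : ℕ → ℝ) (hg0 : g 0 = 0)
    (hg1 : ∀ t : ℕ, 1 ≤ t → g t = (t : ℝ) ^ (-(1/2) : ℝ))
    (pbar : ℝ) (hpbar : pbar = (1 / n) * ∑ i, p i)
    (hlarge : 1 < n * pbar) :
    ∫ ω, g (∑ i, X i ω) ∂μ < 2 * (n * pbar) ^ (-(1/2) : ℝ) := by
  classical
  set m : ℝ := ∑ i, p i with hm_def
  have hn0 : (n:ℝ) ≠ 0 := by positivity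
  have hm_eq : (n:ℝ) * pbar = m := by
    rw [hpbar]; field_simp
  have hm1 : 1 < m := by rw [← hm_eq]; exact hlarge
  have hm0 : 0 < m := lt_trans one_pos hm1
  -- the sum is measurable and bounded by n
  have hSmeas : Measurable (fun ω => ∑ i, X i ω) :=
    Finset.measurable_sum _ (fun i _ => hmeas i)
  have hXle : ∀ i ω, X i ω ≤ 1 := by
    intro i ω; rcases hval i ω with h | h <;> simp [h]
  have hSle : ∀ ω, (∑ i, X i ω) ≤ n := by
    intro ω
    calc ∑ i, X i ω ≤ ∑ _i : Fin n, 1 := Finset.sum_le_sum (fun i _ => hXle i ω)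
      _ = n := by simp
  -- notation for the point masses of the sum
  set q : ℕ → ℝ := fun k => (μ {ω | (∑ i, X i ω) = k}).toReal with hq_def
  have hqnn : ∀ k, 0 ≤ q k := fun k => ENNReal.toReal_nonneg
  have hE : ∀ h : ℕ → ℝ, ∫ ω, h (∑ i, X i ω) ∂μ
      = ∑ k ∈ Finset.range (n+1), h k * q k :=
    fun h => exp_comp_eq_sum' μ _ hSmeas n hSle h
  have hq1 : ∑ k ∈ Finset.range (n+1), q k = 1 := by
    have := hE (fun _ => 1)
    simpa using this.symm
  -- individual Bernoulli expectations
  have hEi : ∀ i (h : ℕ → ℝ), ∫ ω, h (X i ω) ∂μ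
      = h 0 * (μ {ω | X i ω = 0}).toReal + h 1 * p i := by
    intro i h
    have := exp_comp_eq_sum' μ (X i) (hmeas i) 1 (hXle i) h
    rw [this]
    rw [Finset.sum_range_succ, Finset.sum_range_one, hp i]
  have hri : ∀ i, (μ {ω | X i ω = 0}).toReal = 1 - p i := by
    intro i
    have h1 := hEi i (fun _ => 1)
    simp only [one_mul] at h1
    have : (μ {ω | X i ω = 0}).toReal + p i = 1 := by simpa using h1.symm
    linarith
  have hp0 : ∀ i, 0 ≤ p i := fun i => (hp i) ▸ ENNReal.toReal_nonneg
  have hp1 : ∀ i, p i ≤ 1 := by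
    intro i
    have := hri i
    have h0 : 0 ≤ (μ {ω | X i ω = 0}).toReal := ENNReal.toReal_nonneg
    linarith
  -- probability generating function identity
  have hpgf : ∀ x : ℝ, ∑ k ∈ Finset.range (n+1), x ^ k * q k
      = ∏ i, (1 - p i + p i * x) := by
    intro x
    have h1 : ∑ k ∈ Finset.range (n+1), x ^ k * q k
        = ∫ ω, x ^ (∑ i, X i ω) ∂μ := (hE (fun k => x ^ k)).symm
    have h2 : ∀ ω, x ^ (∑ i, X i ω) = ∏ i, x ^ X i ω := by
      intro ω; rw [Finset.prod_pow_eq_pow_sum]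
    rw [h1]
    simp_rw [h2]
    rw [indep_pow_prod' hmeas hindep x Finset.univ]
    refine Finset.prod_congr rfl fun i _ => ?_
    rw [hEi i (fun k => x ^ k), hri i]
    ring
  -- pointwise exponential bound on [0,1]
  have hbound : ∀ x ∈ Set.Icc (0:ℝ) 1,
      ∑ k ∈ Finset.range (n+1), x ^ k * q k ≤ Real.exp (-(1-x)*m) := by
    intro x hx
    rw [hpgf x]
    have hfac : ∀ i : Fin n, 1 - p i + p i * x ≤ Real.exp (-(p i * (1-x))) := by
      intro i
      have := Real.add_one_le_exp (-(p i * (1-x)))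
      linarith
    calc ∏ i, (1 - p i + p i * x)
        ≤ ∏ i, Real.exp (-(p i * (1-x))) := by
          apply Finset.prod_le_prod
          · intro i _
            nlinarith [hp0 i, hp1 i, hx.1, hx.2]
          · intro i _; exact hfac i
      _ = Real.exp (∑ i, -(p i * (1-x))) := by rw [Real.exp_sum]
      _ = Real.exp (-(1-x)*m) := by
          congr 1
          rw [hm_def, Finset.mul_sum]
          exact Finset.sum_congr rfl fun i _ => by ring
  -- integrate the polynomial over [0,1]
  have hIA : ∫ x in (0:ℝ)..1, (∑ k ∈ Finset.range (n+1), x ^ k * q k)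
      = ∑ k ∈ Finset.range (n+1), q k * (1/((k:ℝ)+1)) := by
    rw [intervalIntegral.integral_finset_sum]
    · refine Finset.sum_congr rfl fun k _ => ?_
      rw [intervalIntegral.integral_mul_const, integral_pow]
      simp only [one_pow, zero_pow (Nat.succ_ne_zero k)]
      push_cast
      ring
    · intro k _
      exact (intervalIntegral.intervalIntegrable_pow k).mul_const _
  -- key inequality
  have hkey : ∑ k ∈ Finset.range (n+1), q k * (1/((k:ℝ)+1)) ≤ 1/m := by
    have hIInt1 : IntervalIntegrable
        (fun x => ∑ k ∈ Finset.range (n+1), x ^ k * q k) volume 0 1 := by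
      have h := IntervalIntegrable.sum (μ := volume) (a := (0:ℝ)) (b := 1)
        (Finset.range (n+1)) (f := fun (k : ℕ) (x : ℝ) => x ^ k * q k)
        (fun k _ => (intervalIntegral.intervalIntegrable_pow k).mul_const _)
      simpa [Finset.sum_fn] using h
    have hcont : Continuous (fun x : ℝ => -(1-x)*m) :=
      ((continuous_const.sub continuous_id).neg).mul continuous_const
    have hIInt2 : IntervalIntegrable (fun x => Real.exp (-(1-x)*m)) volume 0 1 :=
      (Real.continuous_exp.comp hcont).intervalIntegrable 0 1
    have hle := intervalIntegral.integral_mono_on (by norm_num : (0:ℝ) ≤ 1)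
      hIInt1 hIInt2 hbound
    rw [hIA, exp_integral_aux m hm0] at hle
    have hexp : 0 < Real.exp (-m) := Real.exp_pos _
    calc ∑ k ∈ Finset.range (n+1), q k * (1/((k:ℝ)+1))
        ≤ (1 - Real.exp (-m))/m := hle
      _ ≤ 1/m := by
          gcongr
          linarith [Real.exp_pos (-m)]
    -- Cauchy–Schwarz
  set T : ℝ := ∑ k ∈ Finset.range (n+1), q k * (1 / Real.sqrt ((k:ℝ)+1)) with hT_def
  have hTnn : 0 ≤ T := Finset.sum_nonneg fun k _ => mul_nonneg (hqnn k) (by positivity)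
  have hT2 : T^2 ≤ ∑ k ∈ Finset.range (n+1), q k * (1/((k:ℝ)+1)) := by
    have hcs := Finset.sum_mul_sq_le_sq_mul_sq (Finset.range (n+1))
      (fun k => Real.sqrt (q k)) (fun k => Real.sqrt (q k) * (1 / Real.sqrt ((k:ℝ)+1)))
    have h1 : ∀ k ∈ Finset.range (n+1),
        Real.sqrt (q k) * (Real.sqrt (q k) * (1 / Real.sqrt ((k:ℝ)+1)))
          = q k * (1 / Real.sqrt ((k:ℝ)+1)) := by
      intro k _
      rw [← mul_assoc, Real.mul_self_sqrt (hqnn k)]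
    have h2 : ∀ k ∈ Finset.range (n+1), (Real.sqrt (q k))^2 = q k :=
      fun k _ => Real.sq_sqrt (hqnn k)
    have h3 : ∀ k ∈ Finset.range (n+1),
        (Real.sqrt (q k) * (1 / Real.sqrt ((k:ℝ)+1)))^2 = q k * (1/((k:ℝ)+1)) := by
      intro k _
      rw [mul_pow, Real.sq_sqrt (hqnn k)]
      congr 1
      rw [div_pow, one_pow, Real.sq_sqrt (by positivity)]
    rw [Finset.sum_congr rfl h1, Finset.sum_congr rfl h2, Finset.sum_congr rfl h3,
      hq1, one_mul] at hcs
    exact hcs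
  have hT2' : T^2 ≤ 1/m := le_trans hT2 hkey
  have hTle : T ≤ Real.sqrt (1/m) := by
    rw [← Real.sqrt_sq hTnn]
    exact Real.sqrt_le_sqrt hT2'
  have hglt : ∀ k : ℕ, g k < 2 * (1 / Real.sqrt ((k:ℝ)+1)) := by
    intro k
    exact sqrt_bound_aux g hg0 hg1 k
  have hEg : ∫ ω, g (∑ i, X i ω) ∂μ = ∑ k ∈ Finset.range (n+1), g k * q k := hE g
  have hsum_lt : ∑ k ∈ Finset.range (n+1), g k * q k < 2 * T := by
    obtain ⟨k₀, hk₀mem, hk₀⟩ : ∃ k ∈ Finset.range (n+1), (0:ℝ) < q k := by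
      by_contra hc
      push_neg at hc
      have hle0 : ∑ k ∈ Finset.range (n+1), q k ≤ 0 :=
        Finset.sum_nonpos fun k hk => hc k hk
      linarith [hq1]
    have hlt : ∑ k ∈ Finset.range (n+1), g k * q k
        < ∑ k ∈ Finset.range (n+1), (2 * (1 / Real.sqrt ((k:ℝ)+1))) * q k := by
      apply Finset.sum_lt_sum
      · intro k _
        exact mul_le_mul_of_nonneg_right (hglt k).le (hqnn k)
      · exact ⟨k₀, hk₀mem, mul_lt_mul_of_pos_right (hglt k₀) hk₀⟩
    calc ∑ k ∈ Finset.range (n+1), g k * q k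
        < ∑ k ∈ Finset.range (n+1), (2 * (1 / Real.sqrt ((k:ℝ)+1))) * q k := hlt
      _ = 2 * T := by
          rw [hT_def, Finset.mul_sum]
          exact Finset.sum_congr rfl fun k _ => by ring
  have hfinal : Real.sqrt (1/m) = m ^ (-(1/2) : ℝ) := by
    rw [Real.rpow_neg hm0.le, ← Real.sqrt_eq_rpow, one_div, Real.sqrt_inv]
  rw [hEg, hm_eq]
  calc ∑ k ∈ Finset.range (n+1), g k * q k < 2 * T := hsum_lt
    _ ≤ 2 * Real.sqrt (1/m) := by linarith [hTle]
    _ = 2 * m ^ (-(1/2) : ℝ) := by rw [hfinal]
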